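/- For all sufficiently large n and any k with 1 ≤ k ≤ n/2 satisfying (k log³ n) ≤ (n−k+1), one has Q( √(2 log((n−k+1)/(k log³ n))) ) ≥ (k log n)/(n−k+1), and consequently Q^{-1}( (k log n)/(n−k+1) ) ≥ √(2 log((n−k+1)/(k log³ n))). -/

import Mathlib

open MeasureTheory ProbabilityTheory

/-- The standard Gaussian tail function `Q(x) = P(Z > x)`. -/
noncomputable def gaussTail (x : ℝ) : ℝ := ((gaussianReal 0 1) (Set.Ioi x)).toReal

/-- The inverse Gaussian tail function `Q⁻¹`. -/
noncomputable def gaussTailInv (p : ℝ) : ℝ := sInf {x : ℝ | gaussTail x ≤ p}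

lemma gaussTail_eq (x : ℝ) :
    gaussTail x = ∫ y in Set.Ioi x, gaussianPDFReal 0 1 y := by
  rw [gaussTail, gaussianReal_apply_eq_integral 0 one_ne_zero,
    ENNReal.toReal_ofReal (integral_nonneg fun y => gaussianPDFReal_nonneg 0 1 y)]

lemma pdf_eq (y : ℝ) :
    gaussianPDFReal 0 1 y = (Real.sqrt (2 * Real.pi))⁻¹ * Real.exp (-(y ^ 2) / 2) := by
  simp [gaussianPDFReal]

lemma gaussTail_anti {a b : ℝ} (h : a < b) : gaussTail b < gaussTail a := by
  rw [gaussTail_eq, gaussTail_eq]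
  have hint : IntegrableOn (gaussianPDFReal 0 1) (Set.Ioi a) :=
    (integrable_gaussianPDFReal 0 1).integrableOn
  have hsplit : Set.Ioc a b ∪ Set.Ioi b = Set.Ioi a := Set.Ioc_union_Ioi_eq_Ioi h.le
  have hdisj : Disjoint (Set.Ioc a b) (Set.Ioi b) := Set.Ioc_disjoint_Ioi le_rfl
  have := setIntegral_union hdisj measurableSet_Ioi
    (hint.mono_set (hsplit ▸ Set.subset_union_left))
    (hint.mono_set (hsplit ▸ Set.subset_union_right))
  rw [hsplit] at this
  rw [this]
  have hpos : 0 < ∫ y in Set.Ioc a b, gaussianPDFReal 0 1 y := by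
    rw [setIntegral_pos_iff_support_of_nonneg_ae
      (ae_of_all _ fun y => gaussianPDFReal_nonneg 0 1 y)
      (hint.mono_set (hsplit ▸ Set.subset_union_left))]
    have : Function.support (gaussianPDFReal 0 1) = Set.univ := by
      ext y; simp [Function.mem_support, (gaussianPDFReal_pos 0 1 y one_ne_zero).ne']
    rw [this, Set.univ_inter, Real.volume_Ioc]
    simp [h]
  linarith

lemma gaussTail_lower {x δ : ℝ} (hx : 0 ≤ x) (hδ : 0 < δ) :
    δ * ((Real.sqrt (2 * Real.pi))⁻¹ * Real.exp (-((x + δ) ^ 2) / 2)) ≤ gaussTail x := by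
  rw [gaussTail_eq]
  have hint : IntegrableOn (gaussianPDFReal 0 1) (Set.Ioi x) :=
    (integrable_gaussianPDFReal 0 1).integrableOn
  have h1 : ∫ y in Set.Ioc x (x + δ), gaussianPDFReal 0 1 y
      ≤ ∫ y in Set.Ioi x, gaussianPDFReal 0 1 y :=
    setIntegral_mono_set hint (ae_of_all _ fun y => gaussianPDFReal_nonneg 0 1 y)
      (HasSubset.Subset.eventuallyLE Set.Ioc_subset_Ioi_self)
  refine le_trans ?_ h1
  have h2 := setIntegral_ge_of_const_le_real (s := Set.Ioc x (x + δ))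
    (c := (Real.sqrt (2 * Real.pi))⁻¹
      * Real.exp (-((x + δ) ^ 2) / 2)) measurableSet_Ioc
    (measure_Ioc_lt_top).ne (f := gaussianPDFReal 0 1) ?_
    (hint.mono_set Set.Ioc_subset_Ioi_self)
  · rw [measureReal_def, Real.volume_Ioc] at h2
    have : x + δ - x = δ := by ring
    rw [this, ENNReal.toReal_ofReal hδ.le] at h2
    linarith
  · intro y hy
    rw [pdf_eq]
    have h3 : 0 ≤ y := le_of_lt (lt_of_le_of_lt hx hy.1)
    have hee : Real.exp (-((x + δ) ^ 2) / 2) ≤ Real.exp (-(y ^ 2) / 2) := by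
      apply Real.exp_le_exp.mpr
      nlinarith [hy.2]
    have hs : 0 ≤ (Real.sqrt (2 * Real.pi))⁻¹ := by positivity
    exact mul_le_mul_of_nonneg_left hee hs

lemma gaussTail_small {p : ℝ} (hp : 0 < p) : ∃ y : ℝ, gaussTail y ≤ p := by
  set y := max 2 (-Real.log p) with hy
  refine ⟨y, ?_⟩
  have hy2 : (2 : ℝ) ≤ y := le_max_left _ _
  rw [gaussTail_eq]
  have hub : ∫ t in Set.Ioi y, gaussianPDFReal 0 1 t ≤ ∫ t in Set.Ioi y, Real.exp (-t) := by
    have hexpint : IntegrableOn (fun t : ℝ => Real.exp (-t)) (Set.Ioi y) := by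
      have := exp_neg_integrableOn_Ioi y (b := 1) one_pos
      simpa using this
    refine setIntegral_mono_on
      ((integrable_gaussianPDFReal 0 1).integrableOn) hexpint measurableSet_Ioi ?_
    intro t ht
    rw [pdf_eq]
    have ht2 : (2:ℝ) ≤ t := le_trans hy2 (le_of_lt ht)
    have h1 : (Real.sqrt (2 * Real.pi))⁻¹ ≤ 1 := by
      rw [inv_le_one_iff₀]
      right
      rw [show (1:ℝ) = Real.sqrt 1 by simp]
      apply Real.sqrt_le_sqrt
      nlinarith [Real.pi_gt_three]
    have h2 : Real.exp (-(t ^ 2) / 2) ≤ Real.exp (-t) := by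
      apply Real.exp_le_exp.mpr
      nlinarith
    calc (Real.sqrt (2 * Real.pi))⁻¹ * Real.exp (-(t ^ 2) / 2)
        ≤ 1 * Real.exp (-t) := by
          apply mul_le_mul h1 h2 (Real.exp_nonneg _) zero_le_one
      _ = Real.exp (-t) := one_mul _
  rw [integral_exp_neg_Ioi] at hub
  refine hub.trans ?_
  have : -Real.log p ≤ y := le_max_right _ _
  calc Real.exp (-y) ≤ Real.exp (Real.log p) := by
        apply Real.exp_le_exp.mpr; linarith
    _ = p := Real.exp_log hp


set_option maxHeartbeats 1000000 in
/-- For all sufficiently large `n` and `1 ≤ k ≤ n/2` with `k log³n ≤ n−k+1`: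
`Q(√(2 log((n−k+1)/(k log³n)))) ≥ (k log n)/(n−k+1)` and hence
`Q⁻¹((k log n)/(n−k+1)) ≥ √(2 log((n−k+1)/(k log³n)))`. -/
theorem stmt14 :
    ∃ N : ℕ, ∀ n : ℕ, N ≤ n → ∀ k : ℕ, 1 ≤ k → (k : ℝ) ≤ (n : ℝ) / 2 →
      (k : ℝ) * (Real.log n) ^ 3 ≤ (n : ℝ) - k + 1 →
      gaussTail (Real.sqrt (2 * Real.log (((n : ℝ) - k + 1) / ((k : ℝ) * (Real.log n) ^ 3))))
          ≥ (k : ℝ) * Real.log n / ((n : ℝ) - k + 1)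
        ∧ gaussTailInv ((k : ℝ) * Real.log n / ((n : ℝ) - k + 1))
          ≥ Real.sqrt (2 * Real.log (((n : ℝ) - k + 1) / ((k : ℝ) * (Real.log n) ^ 3))) := by
  refine ⟨10 ^ 9, fun n hn k hk1 hk2 hk3 => ?_⟩
  have hn' : (10 ^ 9 : ℝ) ≤ (n : ℝ) := by exact_mod_cast Nat.cast_le.mpr hn
  set t := Real.log n with ht
  have ht19 : (19 : ℝ) ≤ t := by
    rw [ht, Real.le_log_iff_exp_le (by linarith)]
    calc Real.exp 19 = Real.exp 1 ^ (19 : ℕ) := by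
          rw [← Real.exp_nat_mul]; norm_num
      _ ≤ 2.7182818286 ^ (19 : ℕ) :=
          pow_le_pow_left₀ (Real.exp_nonneg 1) Real.exp_one_lt_d9.le 19
      _ ≤ 10 ^ 9 := by norm_num
      _ ≤ (n : ℝ) := hn'
  have hk1' : (1 : ℝ) ≤ (k : ℝ) := by exact_mod_cast hk1
  set D := (n : ℝ) - k + 1 with hD
  have hD0 : (0 : ℝ) < D := by rw [hD]; linarith
  have ht0 : (0 : ℝ) < t := by linarith
  have hkt0 : (0 : ℝ) < (k : ℝ) * t ^ 3 := by positivity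
  set r := D / ((k : ℝ) * t ^ 3) with hr
  have hr1 : (1 : ℝ) ≤ r := (one_le_div hkt0).mpr hk3
  have hr0 : (0 : ℝ) < r := lt_of_lt_of_le one_pos hr1
  set L := Real.log r with hL
  have hL0 : (0 : ℝ) ≤ L := Real.log_nonneg hr1
  have hexpL : Real.exp (-L) = (k : ℝ) * t ^ 3 / D := by
    rw [hL, Real.exp_neg, Real.exp_log hr0, hr, inv_div]
  have hLt : L ≤ t := by
    rw [hL, ht]
    apply Real.log_le_log hr0
    have ht3 : (1 : ℝ) ≤ t ^ 3 := one_le_pow₀ (by linarith)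
    have h2 : (1 : ℝ) ≤ (k : ℝ) * t ^ 3 := by nlinarith
    calc r ≤ D := by rw [hr]; exact div_le_self hD0.le h2
      _ ≤ (n : ℝ) := by rw [hD]; linarith
  set x := Real.sqrt (2 * L) with hx
  have hx0 : (0 : ℝ) ≤ x := Real.sqrt_nonneg _
  have hxsq : x ^ 2 = 2 * L := Real.sq_sqrt (by linarith)
  have hxt : x ≤ t / 2 := by
    rw [hx]
    calc Real.sqrt (2 * L) ≤ Real.sqrt ((t / 2) ^ 2) := Real.sqrt_le_sqrt (by nlinarith)
      _ = t / 2 := Real.sqrt_sq (by linarith)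
  have hs0 : (0 : ℝ) < Real.sqrt (2 * Real.pi) := by positivity
  have hsqrtpi : Real.sqrt (2 * Real.pi) ≤ 2.52 := by
    rw [show (2.52 : ℝ) = Real.sqrt (2.52 ^ 2) from (Real.sqrt_sq (by norm_num)).symm]
    apply Real.sqrt_le_sqrt
    nlinarith [Real.pi_lt_d2]
  have hexp32 : Real.exp (3 / 2 : ℝ) ≤ 7.39 := by
    calc Real.exp (3 / 2 : ℝ) ≤ Real.exp 2 := Real.exp_le_exp.mpr (by norm_num)
      _ = Real.exp 1 * Real.exp 1 := by rw [← Real.exp_add]; norm_num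
      _ ≤ 2.7182818286 * 2.7182818286 := by
          nlinarith [Real.exp_one_lt_d9, Real.exp_pos 1]
      _ ≤ 7.39 := by norm_num
  set δ := 1 / (x + 1) with hδdef
  have hδ0 : (0 : ℝ) < δ := by positivity
  have hδ1 : δ ≤ 1 := by
    rw [hδdef, div_le_one (by linarith)]; linarith
  have hlow := gaussTail_lower (x := x) (δ := δ) hx0 hδ0
  have hxδ : x * δ ≤ 1 := by
    rw [hδdef, mul_one_div, div_le_one (by linarith)]; linarith
  have hxd : (x + δ) ^ 2 / 2 ≤ L + 3 / 2 := by nlinarith [hxsq, sq_nonneg δ]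
  have hexpbd : Real.exp (-L) * Real.exp (-(3 / 2 : ℝ)) ≤ Real.exp (-((x + δ) ^ 2) / 2) := by
    rw [← Real.exp_add]
    apply Real.exp_le_exp.mpr
    linarith
  set e' := Real.exp (-(3 / 2 : ℝ)) with he'
  have he'0 : (0 : ℝ) < e' := Real.exp_pos _
  have heE : e' * Real.exp (3 / 2 : ℝ) = 1 := by
    rw [he', ← Real.exp_add]; norm_num
  have key : (k : ℝ) * t / D ≤ gaussTail x := by
    refine le_trans ?_ hlow
    have e1 : δ * ((Real.sqrt (2 * Real.pi))⁻¹ * (Real.exp (-L) * e'))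
        ≤ δ * ((Real.sqrt (2 * Real.pi))⁻¹ * Real.exp (-((x + δ) ^ 2) / 2)) := by
      apply mul_le_mul_of_nonneg_left _ hδ0.le
      exact mul_le_mul_of_nonneg_left hexpbd (by positivity)
    refine le_trans ?_ e1
    rw [hexpL]
    have expand : δ * ((Real.sqrt (2 * Real.pi))⁻¹ * ((k : ℝ) * t ^ 3 / D * e'))
        = ((k : ℝ) * t ^ 3 * e') / (D * (x + 1) * Real.sqrt (2 * Real.pi)) := by
      rw [hδdef]
      field_simp
    rw [expand, div_le_div_iff₀ hD0 (by positivity)]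
    have h5 : (x + 1) * Real.sqrt (2 * Real.pi) ≤ t ^ 2 * e' := by
      have hx1 : x + 1 ≤ t := by linarith
      have hc : Real.sqrt (2 * Real.pi) * Real.exp (3 / 2 : ℝ) ≤ 19 := by
        nlinarith [Real.exp_pos (3 / 2 : ℝ)]
      have hstep : (x + 1) * (Real.sqrt (2 * Real.pi) * Real.exp (3 / 2 : ℝ)) ≤ t ^ 2 := by
        nlinarith
      calc (x + 1) * Real.sqrt (2 * Real.pi)
          = (x + 1) * (Real.sqrt (2 * Real.pi) * Real.exp (3 / 2 : ℝ)) * e' := by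
            rw [mul_assoc, mul_assoc, mul_comm (Real.exp (3/2:ℝ)) e', heE, mul_one]
        _ ≤ t ^ 2 * e' := mul_le_mul_of_nonneg_right hstep he'0.le
    nlinarith [mul_pos (mul_pos (mul_pos (lt_of_lt_of_le one_pos hk1') ht0) hD0) he'0]
  have hp : (0 : ℝ) < (k : ℝ) * t / D := by positivity
  refine ⟨key, ?_⟩
  obtain ⟨y, hy⟩ := gaussTail_small hp
  rw [ge_iff_le, gaussTailInv]
  refine le_csInf ⟨y, hy⟩ fun b hb => ?_
  by_contra hbx
  push_neg at hbx
  have := gaussTail_anti hbx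
  simp only [Set.mem_setOf_eq] at hb
  linarith
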